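/- Let C be the r×r Cartan matrix of type A_r (C_{αβ} = 2 if α = β, −1 if |α−β| = 1, 0 otherwise), which is invertible over ℚ, and let Ω be the 2r×2r block matrix [[0, C⁻¹],[−C⁻¹, 0]]. For β ∈ {0,1,…,r+1} let ē(β) ∈ ℚ^{2r} equal the standard basis vector e_β if 1 ≤ β ≤ r and 0 if β ∈ {0, r+1}, and let ē'(β) equal e_{r+β} if 1 ≤ β ≤ r and 0 if β ∈ {0, r+1}. Define v_{2α−1} = ē(α−1) − ē(α) − ē'(α−1) + ē'(α) for α ∈ {1,…,r+1} and v_{2α} = ē(α−1) − ē(α) − ē'(α) + ē'(α+1) for α ∈ {1,…,r}. Then for all i, j ∈ {1,…,2r+1}, v_iᵀ Ω v_j = ε(i,j). -/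

import Mathlib

open Finset

/-- Adjacency in the graph `G_r` on vertex set `{1, …, 2r+1}`: edges
`{i, i+1}` for `1 ≤ i ≤ 2r`, together with `{2α, 2α+2}` for `1 ≤ α ≤ r-1`. -/
def GrAdj (r i j : ℕ) : Prop :=
  (max i j = min i j + 1 ∧ 1 ≤ min i j ∧ max i j ≤ 2 * r + 1) ∨
  (Even (min i j) ∧ max i j = min i j + 2 ∧ 2 ≤ min i j ∧ max i j ≤ 2 * r)

instance (r i j : ℕ) : Decidable (GrAdj r i j) := by
  unfold GrAdj; infer_instance

/-- The intersection pairing `ε(i,j)`: `1` if `i < j` and `{i,j}` is an edge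
of `G_r`, `-1` if `i > j` and `{i,j}` is an edge of `G_r`, `0` otherwise. -/
def epsPair (r i j : ℕ) : ℤ :=
  if GrAdj r i j then (if i < j then 1 else -1) else 0

/-- The Cartan matrix of type `A_r`. -/
def CartanA (r : ℕ) : Matrix (Fin r) (Fin r) ℚ :=
  Matrix.of fun α β =>
    if α = β then 2 else if (α : ℕ) + 1 = (β : ℕ) ∨ (β : ℕ) + 1 = (α : ℕ) then -1 else 0

/-- The Poisson coefficient matrix `Ω = [[0, C⁻¹], [-C⁻¹, 0]]`, indexed by
`Fin r ⊕ Fin r` (the first block for `A_1,…,A_r`, the second for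
`A_{r+1},…,A_{2r}`). -/
noncomputable def OmegaA (r : ℕ) : Matrix (Fin r ⊕ Fin r) (Fin r ⊕ Fin r) ℚ :=
  Matrix.fromBlocks 0 (CartanA r)⁻¹ (-(CartanA r)⁻¹) 0

/-- `ē(β)`: the standard basis vector `e_β` of the first block when
`1 ≤ β ≤ r`, and `0` when `β ∈ {0, r+1}`. -/
def ebar (r β : ℕ) : (Fin r ⊕ Fin r) → ℚ :=
  if h : 1 ≤ β ∧ β ≤ r then Pi.single (Sum.inl ⟨β - 1, by omega⟩) 1 else 0

/-- `ē'(β)`: the standard basis vector `e_{r+β}` (second block) when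
`1 ≤ β ≤ r`, and `0` when `β ∈ {0, r+1}`. -/
def ebar' (r β : ℕ) : (Fin r ⊕ Fin r) → ℚ :=
  if h : 1 ≤ β ∧ β ≤ r then Pi.single (Sum.inr ⟨β - 1, by omega⟩) 1 else 0

/-- The exponent vector `v_i` of the loop weight `γ_i` as a Laurent monomial:
`v_{2α-1} = ē(α-1) - ē(α) - ē'(α-1) + ē'(α)` for `α ∈ {1,…,r+1}` and
`v_{2α} = ē(α-1) - ē(α) - ē'(α) + ē'(α+1)` for `α ∈ {1,…,r}`. -/
def vVec (r i : ℕ) : (Fin r ⊕ Fin r) → ℚ :=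
  if i % 2 = 1 then
    ebar r ((i + 1) / 2 - 1) - ebar r ((i + 1) / 2)
      - ebar' r ((i + 1) / 2 - 1) + ebar' r ((i + 1) / 2)
  else
    ebar r (i / 2 - 1) - ebar r (i / 2) - ebar' r (i / 2) + ebar' r (i / 2 + 1)

noncomputable def mEnt (r i j : ℕ) : ℚ :=
  ((min i j : ℕ) : ℚ) * ((r : ℚ) + 1 - ((max i j : ℕ) : ℚ)) / ((r : ℚ) + 1)

lemma mEnt_of_le {i j : ℕ} (r : ℕ) (h : i ≤ j) :
    mEnt r i j = (i : ℚ) * ((r : ℚ) + 1 - (j : ℚ)) / ((r : ℚ) + 1) := by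
  rw [mEnt, min_eq_left h, max_eq_right h]

lemma mEnt_symm (r i j : ℕ) : mEnt r i j = mEnt r j i := by
  rw [mEnt, mEnt, min_comm, max_comm]

noncomputable def MinvA (r : ℕ) : Matrix (Fin r) (Fin r) ℚ :=
  Matrix.of fun α β => mEnt r ((α : ℕ) + 1) ((β : ℕ) + 1)

lemma hr1ne (r : ℕ) : ((r : ℚ) + 1) ≠ 0 := by positivity

lemma sum_ite_val {r c : ℕ} (hc : c < r) (f : Fin r → ℚ) :
    (∑ γ : Fin r, if (γ : ℕ) = c then f γ else 0) = f ⟨c, hc⟩ := by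
  rw [Finset.sum_eq_single (⟨c, hc⟩ : Fin r)]
  · simp
  · intro b _ hb
    rw [if_neg (by simpa [Fin.ext_iff] using hb)]
  · simp

lemma sum_ite_zero {r c : ℕ} (hc : r ≤ c) (f : Fin r → ℚ) :
    (∑ γ : Fin r, if (γ : ℕ) = c then f γ else 0) = 0 :=
  Finset.sum_eq_zero fun γ _ => if_neg (by have := γ.isLt; omega)

lemma cartan_mul_minv (r : ℕ) : CartanA r * MinvA r = 1 := by
  ext α β
  rw [Matrix.mul_apply]
  have key : ∀ γ : Fin r, CartanA r α γ * MinvA r γ β =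
      (if (γ : ℕ) = (α : ℕ) then 2 * MinvA r γ β else 0)
      + ((if (γ : ℕ) = (α : ℕ) + 1 then -MinvA r γ β else 0)
        + (if (γ : ℕ) = (α : ℕ) - 1 ∧ 1 ≤ (α : ℕ) then -MinvA r γ β else 0)) := by
    intro γ
    simp only [CartanA, Matrix.of_apply, Fin.ext_iff]
    split_ifs <;> first | omega | ring
  rw [Finset.sum_congr rfl fun γ _ => key γ, Finset.sum_add_distrib, Finset.sum_add_distrib]
  have hα := α.isLt
  have hβ := β.isLt
  rw [sum_ite_val hα fun γ => 2 * MinvA r γ β]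
  rw [Matrix.one_apply]
  have hne := hr1ne r
  simp only [MinvA, Matrix.of_apply]
  by_cases h2 : (α : ℕ) + 1 < r <;> by_cases h3 : 1 ≤ (α : ℕ)
  · rw [sum_ite_val h2 fun γ => -mEnt r ((γ:ℕ)+1) ((β:ℕ)+1)]
    rw [show (∑ γ : Fin r, if (γ:ℕ) = (α:ℕ) - 1 ∧ 1 ≤ (α:ℕ) then
          -mEnt r ((γ:ℕ)+1) ((β:ℕ)+1) else 0)
        = ∑ γ : Fin r, if (γ:ℕ) = (α:ℕ) - 1 then -mEnt r ((γ:ℕ)+1) ((β:ℕ)+1) else 0 from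
      Finset.sum_congr rfl fun γ _ => by simp only [h3, and_true]]
    rw [sum_ite_val (show (α:ℕ) - 1 < r by omega) fun γ => -mEnt r ((γ:ℕ)+1) ((β:ℕ)+1)]
    simp only []
    rw [show (α:ℕ) - 1 + 1 = (α:ℕ) from by omega]
    rcases Nat.lt_trichotomy (α:ℕ) (β:ℕ) with h | h | h
    · rw [if_neg (by simp [Fin.ext_iff]; omega)]
      rw [mEnt_of_le r (by omega), mEnt_of_le r (by omega), mEnt_of_le r (by omega)]
      push_cast
      field_simp
      try ring
    · rw [if_pos (by simp [Fin.ext_iff, h])]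
      rw [mEnt_of_le r (by omega), mEnt_symm r ((α:ℕ)+1+1), mEnt_of_le r (by omega),
        mEnt_of_le r (by omega)]
      rw [h]
      push_cast
      field_simp
      try ring
    · rw [if_neg (by simp [Fin.ext_iff]; omega)]
      rw [mEnt_symm r ((α:ℕ)+1), mEnt_of_le r (by omega),
        mEnt_symm r ((α:ℕ)+1+1), mEnt_of_le r (by omega),
        mEnt_symm r (α:ℕ), mEnt_of_le r (by omega)]
      push_cast
      field_simp
      try ring
  · -- α = 0, α + 1 < r
    rw [sum_ite_val h2 fun γ => -mEnt r ((γ:ℕ)+1) ((β:ℕ)+1)]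
    rw [Finset.sum_eq_zero fun γ _ => if_neg (by omega)]
    simp only []
    have hα0 : (α:ℕ) = 0 := by omega
    rcases Nat.lt_trichotomy (α:ℕ) (β:ℕ) with h | h | h
    · rw [if_neg (by simp [Fin.ext_iff]; omega)]
      rw [mEnt_of_le r (by omega), mEnt_of_le r (by omega)]
      push_cast [hα0]
      field_simp
      try ring
    · rw [if_pos (by simp [Fin.ext_iff, h])]
      rw [mEnt_of_le r (by omega), mEnt_symm r ((α:ℕ)+1+1), mEnt_of_le r (by omega)]
      rw [h]
      push_cast [hα0, ← h]
      field_simp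
      try ring
    · omega
  · -- α = r - 1, α ≥ 1
    rw [sum_ite_zero (by omega) fun γ => -mEnt r ((γ:ℕ)+1) ((β:ℕ)+1)]
    rw [show (∑ γ : Fin r, if (γ:ℕ) = (α:ℕ) - 1 ∧ 1 ≤ (α:ℕ) then
          -mEnt r ((γ:ℕ)+1) ((β:ℕ)+1) else 0)
        = ∑ γ : Fin r, if (γ:ℕ) = (α:ℕ) - 1 then -mEnt r ((γ:ℕ)+1) ((β:ℕ)+1) else 0 from
      Finset.sum_congr rfl fun γ _ => by simp only [h3, and_true]]
    rw [sum_ite_val (show (α:ℕ) - 1 < r by omega) fun γ => -mEnt r ((γ:ℕ)+1) ((β:ℕ)+1)]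
    simp only []
    rw [show (α:ℕ) - 1 + 1 = (α:ℕ) from by omega]
    rcases Nat.lt_trichotomy (α:ℕ) (β:ℕ) with h | h | h
    · omega
    · rw [if_pos (by simp [Fin.ext_iff, h])]
      rw [mEnt_of_le r (by omega), mEnt_of_le r (by omega)]
      rw [h]
      have hrα : (β:ℕ) + 1 = r := by omega
      push_cast [← hrα, h]
      field_simp
      try ring
    · rw [if_neg (by simp [Fin.ext_iff]; omega)]
      rw [mEnt_symm r ((α:ℕ)+1), mEnt_of_le r (by omega),
        mEnt_symm r (α:ℕ), mEnt_of_le r (by omega)]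
      have hrα : (α:ℕ) + 1 = r := by omega
      push_cast [← hrα]
      field_simp
      try ring
  · -- r = 1, α = β = 0
    have hr1 : r = 1 := by omega
    have hα0 : (α:ℕ) = 0 := by omega
    have hβ0 : (β:ℕ) = 0 := by omega
    rw [sum_ite_zero (by omega) fun γ => -mEnt r ((γ:ℕ)+1) ((β:ℕ)+1)]
    rw [Finset.sum_eq_zero fun γ _ => if_neg (by omega)]
    rw [if_pos (by simp [Fin.ext_iff]; omega)]
    rw [mEnt_of_le r (by omega)]
    push_cast [hα0, hβ0, hr1]
    norm_num

lemma cartan_inv (r : ℕ) : (CartanA r)⁻¹ = MinvA r :=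
  Matrix.inv_eq_right_inv (cartan_mul_minv r)

/-- first-block restriction of a basis-type vector -/
def eb (r β : ℕ) : Fin r → ℚ :=
  if h : 1 ≤ β ∧ β ≤ r then Pi.single ⟨β - 1, by omega⟩ 1 else 0

lemma ebar_inl (r β : ℕ) (x : Fin r) : ebar r β (Sum.inl x) = eb r β x := by
  unfold ebar eb
  split_ifs with h
  · simp [Pi.single_apply]
  · rfl

lemma ebar_inr (r β : ℕ) (x : Fin r) : ebar r β (Sum.inr x) = 0 := by
  unfold ebar
  split_ifs with h
  · simp [Pi.single_apply]
  · rfl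

lemma ebar'_inr (r β : ℕ) (x : Fin r) : ebar' r β (Sum.inr x) = eb r β x := by
  unfold ebar' eb
  split_ifs with h
  · simp [Pi.single_apply]
  · rfl

lemma ebar'_inl (r β : ℕ) (x : Fin r) : ebar' r β (Sum.inl x) = 0 := by
  unfold ebar'
  split_ifs with h
  · simp [Pi.single_apply]
  · rfl

lemma block_pair (r : ℕ) (x y : (Fin r ⊕ Fin r) → ℚ) :
    dotProduct x ((OmegaA r).mulVec y) =
      dotProduct (x ∘ Sum.inl) ((MinvA r).mulVec (y ∘ Sum.inr))
      - dotProduct (x ∘ Sum.inr) ((MinvA r).mulVec (y ∘ Sum.inl)) := by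
  rw [OmegaA, cartan_inv, Matrix.fromBlocks_mulVec]
  rw [dotProduct, Fintype.sum_sum_type]
  simp only [Sum.elim_inl, Sum.elim_inr, Matrix.zero_mulVec, Matrix.neg_mulVec,
    zero_add, add_zero, Pi.add_apply, Pi.neg_apply, Function.comp]
  rw [dotProduct, dotProduct, ← Finset.sum_sub_distrib, ← Finset.sum_add_distrib]
  exact Finset.sum_congr rfl fun z _ => by simp only [Function.comp]; ring

lemma vVec_inl_odd (r i : ℕ) (h : i % 2 = 1) (x : Fin r) :
    vVec r i (Sum.inl x) = (eb r ((i + 1) / 2 - 1) - eb r ((i + 1) / 2)) x := by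
  simp [vVec, h, ebar_inl, ebar'_inl]

lemma vVec_inr_odd (r i : ℕ) (h : i % 2 = 1) (x : Fin r) :
    vVec r i (Sum.inr x) = (eb r ((i + 1) / 2) - eb r ((i + 1) / 2 - 1)) x := by
  simp [vVec, h, ebar_inr, ebar'_inr]
  ring

lemma vVec_inl_even (r i : ℕ) (h : i % 2 = 0) (x : Fin r) :
    vVec r i (Sum.inl x) = (eb r (i / 2 - 1) - eb r (i / 2)) x := by
  simp [vVec, h, ebar_inl, ebar'_inl]

lemma vVec_inr_even (r i : ℕ) (h : i % 2 = 0) (x : Fin r) :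
    vVec r i (Sum.inr x) = (eb r (i / 2 + 1) - eb r (i / 2)) x := by
  simp [vVec, h, ebar_inr, ebar'_inr]
  ring

lemma Feq (r a c : ℕ) (ha : a ≤ r + 1) (hc : c ≤ r + 1) :
    dotProduct (eb r a) ((MinvA r).mulVec (eb r c)) = mEnt r a c := by
  unfold eb
  split_ifs with h1 h2 h2
  · rw [Matrix.mulVec_single, single_dotProduct]
    simp only [MinvA, Matrix.of_apply, one_mul, mul_one, MulOpposite.op_one, one_smul, Matrix.col_apply]
    rw [show (a-1)+1 = a from by omega, show (c-1)+1 = c from by omega]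
  · rw [Matrix.mulVec_zero, dotProduct_zero]
    rcases (show c = 0 ∨ c = r + 1 by omega) with rfl | rfl
    · rw [mEnt]; simp
    · rw [mEnt_of_le r (by omega)]
      push_cast
      ring
  · rw [zero_dotProduct]
    rcases (show a = 0 ∨ a = r + 1 by omega) with rfl | rfl
    · rw [mEnt]; simp
    · rw [mEnt_symm, mEnt_of_le r (by omega)]
      push_cast
      ring
  · rw [zero_dotProduct]
    rcases (show a = 0 ∨ a = r + 1 by omega) with rfl | rfl
    · rw [mEnt]; simp
    · rw [mEnt_symm, mEnt_of_le r (by omega)]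
      push_cast
      ring

lemma fEnt (r a c : ℕ) (ha1 : 1 ≤ a) (ha2 : a ≤ r + 1) (hc1 : 1 ≤ c) (hc2 : c ≤ r + 1) :
    mEnt r (a-1) (c-1) - mEnt r (a-1) c - mEnt r a (c-1) + mEnt r a c
      = (if a = c then 1 else 0) - 1 / ((r:ℚ) + 1) := by
  obtain ⟨a', rfl⟩ : ∃ a', a = a' + 1 := ⟨a - 1, by omega⟩
  obtain ⟨c', rfl⟩ : ∃ c', c = c' + 1 := ⟨c - 1, by omega⟩
  simp only [Nat.add_sub_cancel]
  have hne := hr1ne r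
  rcases Nat.lt_trichotomy a' c' with h | h | h
  · rw [if_neg (by omega)]
    rw [mEnt_of_le r (by omega), mEnt_of_le r (by omega), mEnt_of_le r (by omega),
      mEnt_of_le r (by omega)]
    push_cast
    field_simp
    try ring
  · rw [if_pos (by omega)]
    subst h
    rw [mEnt_of_le r (by omega), mEnt_of_le r (by omega), mEnt_symm r (a'+1) a',
      mEnt_of_le r (by omega), mEnt_of_le r (by omega)]
    push_cast
    field_simp
    try ring
  · rw [if_neg (by omega)]
    rw [mEnt_symm r a' c', mEnt_of_le r (by omega), mEnt_symm r a' (c'+1),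
      mEnt_of_le r (by omega), mEnt_symm r (a'+1) c', mEnt_of_le r (by omega),
      mEnt_symm r (a'+1) (c'+1), mEnt_of_le r (by omega)]
    push_cast
    field_simp
    try ring

lemma epsPair_eq (r i j : ℕ) :
    epsPair r i j = if (max i j = min i j + 1 ∧ 1 ≤ min i j ∧ max i j ≤ 2*r+1)
      ∨ (min i j % 2 = 0 ∧ max i j = min i j + 2 ∧ 2 ≤ min i j ∧ max i j ≤ 2*r)
      then (if i < j then 1 else -1) else 0 := by
  simp [epsPair, GrAdj, Nat.even_iff]

theorem vVec_dot_Omega_eq_epsPair (r : ℕ) (hr : 1 ≤ r) :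
    IsUnit (CartanA r).det ∧
    ∀ i ∈ Finset.Icc 1 (2 * r + 1), ∀ j ∈ Finset.Icc 1 (2 * r + 1),
      dotProduct (vVec r i) ((OmegaA r).mulVec (vVec r j)) =
        ((epsPair r i j : ℤ) : ℚ) := by
  refine ⟨Matrix.isUnit_det_of_right_inverse (cartan_mul_minv r), ?_⟩
  intro i hi j hj
  simp only [Finset.mem_Icc] at hi hj
  obtain ⟨hi1, hi2⟩ := hi
  obtain ⟨hj1, hj2⟩ := hj
  rw [block_pair]
  rcases Nat.mod_two_eq_zero_or_one i with hpi | hpi <;>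
    rcases Nat.mod_two_eq_zero_or_one j with hpj | hpj
  · -- i even, j even
    have hLi : vVec r i ∘ Sum.inl = eb r (i/2-1) - eb r (i/2) :=
      funext fun x => vVec_inl_even r i hpi x
    have hRi : vVec r i ∘ Sum.inr = eb r (i/2+1) - eb r (i/2) :=
      funext fun x => vVec_inr_even r i hpi x
    have hLj : vVec r j ∘ Sum.inl = eb r (j/2-1) - eb r (j/2) :=
      funext fun x => vVec_inl_even r j hpj x
    have hRj : vVec r j ∘ Sum.inr = eb r (j/2+1) - eb r (j/2) :=
      funext fun x => vVec_inr_even r j hpj x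
    rw [hLi, hRi, hLj, hRj]
    simp only [Matrix.mulVec_sub, dotProduct_sub, sub_dotProduct]
    rw [Feq r (i/2-1) (j/2+1) (by omega) (by omega), Feq r (i/2-1) (j/2) (by omega) (by omega),
        Feq r (i/2) (j/2+1) (by omega) (by omega), Feq r (i/2) (j/2) (by omega) (by omega),
        Feq r (i/2+1) (j/2-1) (by omega) (by omega), Feq r (i/2+1) (j/2) (by omega) (by omega),
        Feq r (i/2) (j/2-1) (by omega) (by omega)]
    have H1 := fEnt r (i/2) (j/2+1) (by omega) (by omega) (by omega) (by omega)
    have H2 := fEnt r (i/2+1) (j/2) (by omega) (by omega) (by omega) (by omega)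
    simp only [Nat.add_sub_cancel] at H1 H2
    have heps : (if i/2+1 = j/2 then (1:ℚ) else 0) - (if i/2 = j/2+1 then 1 else 0)
        = ((epsPair r i j : ℤ) : ℚ) := by
      rw [epsPair_eq]
      split_ifs <;> push_cast <;> first | omega | norm_num
    linear_combination H2 - H1 + heps
  · -- i even, j odd
    have hLi : vVec r i ∘ Sum.inl = eb r (i/2-1) - eb r (i/2) :=
      funext fun x => vVec_inl_even r i hpi x
    have hRi : vVec r i ∘ Sum.inr = eb r (i/2+1) - eb r (i/2) :=
      funext fun x => vVec_inr_even r i hpi x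
    have hLj : vVec r j ∘ Sum.inl = eb r ((j+1)/2-1) - eb r ((j+1)/2) :=
      funext fun x => vVec_inl_odd r j hpj x
    have hRj : vVec r j ∘ Sum.inr = eb r ((j+1)/2) - eb r ((j+1)/2-1) :=
      funext fun x => vVec_inr_odd r j hpj x
    rw [hLi, hRi, hLj, hRj]
    simp only [Matrix.mulVec_sub, dotProduct_sub, sub_dotProduct]
    rw [Feq r (i/2-1) ((j+1)/2) (by omega) (by omega),
        Feq r (i/2-1) ((j+1)/2-1) (by omega) (by omega),
        Feq r (i/2) ((j+1)/2) (by omega) (by omega),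
        Feq r (i/2) ((j+1)/2-1) (by omega) (by omega),
        Feq r (i/2+1) ((j+1)/2-1) (by omega) (by omega),
        Feq r (i/2+1) ((j+1)/2) (by omega) (by omega)]
    have H1 := fEnt r (i/2) ((j+1)/2) (by omega) (by omega) (by omega) (by omega)
    have H2 := fEnt r (i/2+1) ((j+1)/2) (by omega) (by omega) (by omega) (by omega)
    simp only [Nat.add_sub_cancel] at H1 H2
    have heps : (if i/2+1 = (j+1)/2 then (1:ℚ) else 0) - (if i/2 = (j+1)/2 then 1 else 0)
        = ((epsPair r i j : ℤ) : ℚ) := by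
      rw [epsPair_eq]
      split_ifs <;> push_cast <;> first | omega | norm_num
    linear_combination H2 - H1 + heps
  · -- i odd, j even
    have hLi : vVec r i ∘ Sum.inl = eb r ((i+1)/2-1) - eb r ((i+1)/2) :=
      funext fun x => vVec_inl_odd r i hpi x
    have hRi : vVec r i ∘ Sum.inr = eb r ((i+1)/2) - eb r ((i+1)/2-1) :=
      funext fun x => vVec_inr_odd r i hpi x
    have hLj : vVec r j ∘ Sum.inl = eb r (j/2-1) - eb r (j/2) :=
      funext fun x => vVec_inl_even r j hpj x
    have hRj : vVec r j ∘ Sum.inr = eb r (j/2+1) - eb r (j/2) :=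
      funext fun x => vVec_inr_even r j hpj x
    rw [hLi, hRi, hLj, hRj]
    simp only [Matrix.mulVec_sub, dotProduct_sub, sub_dotProduct]
    rw [Feq r ((i+1)/2-1) (j/2+1) (by omega) (by omega),
        Feq r ((i+1)/2-1) (j/2) (by omega) (by omega),
        Feq r ((i+1)/2) (j/2+1) (by omega) (by omega),
        Feq r ((i+1)/2) (j/2) (by omega) (by omega),
        Feq r ((i+1)/2) (j/2-1) (by omega) (by omega),
        Feq r ((i+1)/2-1) (j/2-1) (by omega) (by omega)]
    have H1 := fEnt r ((i+1)/2) (j/2) (by omega) (by omega) (by omega) (by omega)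
    have H2 := fEnt r ((i+1)/2) (j/2+1) (by omega) (by omega) (by omega) (by omega)
    simp only [Nat.add_sub_cancel] at H1 H2
    have heps : (if (i+1)/2 = j/2 then (1:ℚ) else 0) - (if (i+1)/2 = j/2+1 then 1 else 0)
        = ((epsPair r i j : ℤ) : ℚ) := by
      rw [epsPair_eq]
      split_ifs <;> push_cast <;> first | omega | norm_num
    linear_combination H1 - H2 + heps
  · -- i odd, j odd
    have hLi : vVec r i ∘ Sum.inl = eb r ((i+1)/2-1) - eb r ((i+1)/2) :=
      funext fun x => vVec_inl_odd r i hpi x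
    have hRi : vVec r i ∘ Sum.inr = eb r ((i+1)/2) - eb r ((i+1)/2-1) :=
      funext fun x => vVec_inr_odd r i hpi x
    have hLj : vVec r j ∘ Sum.inl = eb r ((j+1)/2-1) - eb r ((j+1)/2) :=
      funext fun x => vVec_inl_odd r j hpj x
    have hRj : vVec r j ∘ Sum.inr = eb r ((j+1)/2) - eb r ((j+1)/2-1) :=
      funext fun x => vVec_inr_odd r j hpj x
    rw [hLi, hRi, hLj, hRj]
    simp only [Matrix.mulVec_sub, dotProduct_sub, sub_dotProduct]
    rw [Feq r ((i+1)/2-1) ((j+1)/2) (by omega) (by omega),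
        Feq r ((i+1)/2-1) ((j+1)/2-1) (by omega) (by omega),
        Feq r ((i+1)/2) ((j+1)/2) (by omega) (by omega),
        Feq r ((i+1)/2) ((j+1)/2-1) (by omega) (by omega)]
    rw [epsPair_eq, if_neg (by omega)]
    push_cast
    ring
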